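/- arXiv:1611.06497 — 4 statements merged into one kernel-verified Lean document; each statement's English description precedes it below -/
import Mathlib

section
/- Let C be a positive natural number, j : Fin C a fixed index, σ² > 0, g_j > 0, and g_c ≥ 0 for all c ≠ j. Define the SINR in log-power coordinates by γ(exp(p̃)) = g_j · exp(p̃_j) / (σ² + ∑_{c ≠ j} g_c · exp(p̃_c)). Then the function p̃ ↦ log(γ(exp(p̃))) = log(g_j) + p̃_j − log(σ² + ∑_{c ≠ j} g_c · exp(p̃_c)) is concave on ℝ^C (Fin C → ℝ). -/
open Real

lemma logsumexp_convex (C : ℕ) (j : Fin C) (σ2 : ℝ) (hσ2 : 0 < σ2)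
    (g : Fin C → ℝ) (hg : ∀ c, c ≠ j → 0 ≤ g c) :
    ConvexOn ℝ Set.univ
      (fun pt : Fin C → ℝ =>
        Real.log (σ2 + ∑ c ∈ Finset.univ.erase j, g c * Real.exp (pt c))) := by
  have hsum : ∀ pt : Fin C → ℝ,
      0 ≤ ∑ c ∈ Finset.univ.erase j, g c * Real.exp (pt c) := by
    intro pt
    refine Finset.sum_nonneg fun c hc => ?_
    exact mul_nonneg (hg c (Finset.ne_of_mem_erase hc)) (Real.exp_pos _).le
  have hpos : ∀ pt : Fin C → ℝ,
      0 < σ2 + ∑ c ∈ Finset.univ.erase j, g c * Real.exp (pt c) := by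
    intro pt; linarith [hsum pt]
  refine ⟨convex_univ, ?_⟩
  intro x _ y _ a b ha hb hab
  set A := σ2 + ∑ c ∈ Finset.univ.erase j, g c * Real.exp (x c) with hA
  set B := σ2 + ∑ c ∈ Finset.univ.erase j, g c * Real.exp (y c) with hB
  have hApos : 0 < A := hpos x
  have hBpos : 0 < B := hpos y
  -- key pointwise inequality
  have key : σ2 + ∑ c ∈ Finset.univ.erase j, g c * Real.exp ((a • x + b • y) c)
      ≤ A ^ a * B ^ b := by
    have habmul : 0 < A ^ a * B ^ b :=
      mul_pos (Real.rpow_pos_of_pos hApos a) (Real.rpow_pos_of_pos hBpos b)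
    have hterm : ∀ c ∈ Finset.univ.erase j,
        g c * Real.exp ((a • x + b • y) c)
          ≤ A ^ a * B ^ b * (a * (g c * Real.exp (x c)) / A + b * (g c * Real.exp (y c)) / B) := by
      intro c hc
      have hgc : 0 ≤ g c := hg c (Finset.ne_of_mem_erase hc)
      have hxval : (a • x + b • y) c = a * x c + b * y c := by
        simp [Pi.add_apply, Pi.smul_apply, smul_eq_mul]
      have heq : g c * Real.exp ((a • x + b • y) c)
          = (g c * Real.exp (x c)) ^ a * (g c * Real.exp (y c)) ^ b := by
        have hgab : g c ^ a * g c ^ b = g c := by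
          rw [← Real.rpow_add' hgc (by rw [hab]; norm_num), hab, Real.rpow_one]
        rw [hxval, Real.exp_add, mul_comm a (x c), mul_comm b (y c), Real.exp_mul,
          Real.exp_mul, Real.mul_rpow hgc (Real.exp_pos _).le,
          Real.mul_rpow hgc (Real.exp_pos _).le]
        linear_combination (-(Real.exp (x c) ^ a * Real.exp (y c) ^ b)) * hgab
      rw [heq]
      set u := g c * Real.exp (x c) with hu
      set v := g c * Real.exp (y c) with hv
      have hunn : 0 ≤ u := mul_nonneg hgc (Real.exp_pos _).le
      have hvnn : 0 ≤ v := mul_nonneg hgc (Real.exp_pos _).le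
      have hdecomp : u ^ a * v ^ b = A ^ a * B ^ b * ((u / A) ^ a * (v / B) ^ b) := by
        rw [Real.div_rpow hunn hApos.le, Real.div_rpow hvnn hBpos.le]
        field_simp
        try ring
      rw [hdecomp]
      have hgm : (u / A) ^ a * (v / B) ^ b ≤ a * (u / A) + b * (v / B) :=
        Real.geom_mean_le_arith_mean2_weighted ha hb
          (div_nonneg hunn hApos.le) (div_nonneg hvnn hBpos.le) hab
      calc A ^ a * B ^ b * ((u / A) ^ a * (v / B) ^ b)
          ≤ A ^ a * B ^ b * (a * (u / A) + b * (v / B)) := by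
            exact mul_le_mul_of_nonneg_left hgm habmul.le
        _ = A ^ a * B ^ b * (a * u / A + b * v / B) := by ring
    have hσterm : σ2 ≤ A ^ a * B ^ b * (a * σ2 / A + b * σ2 / B) := by
      have heq : σ2 = σ2 ^ a * σ2 ^ b := by
        rw [← Real.rpow_add hσ2, hab, Real.rpow_one]
      have hdecomp : σ2 ^ a * σ2 ^ b = A ^ a * B ^ b * ((σ2 / A) ^ a * (σ2 / B) ^ b) := by
        rw [Real.div_rpow hσ2.le hApos.le, Real.div_rpow hσ2.le hBpos.le]
        field_simp
        try ring
      have hgm : (σ2 / A) ^ a * (σ2 / B) ^ b ≤ a * (σ2 / A) + b * (σ2 / B) :=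
        Real.geom_mean_le_arith_mean2_weighted ha hb
          (div_nonneg hσ2.le hApos.le) (div_nonneg hσ2.le hBpos.le) hab
      calc σ2 = A ^ a * B ^ b * ((σ2 / A) ^ a * (σ2 / B) ^ b) := by rw [← hdecomp, ← heq]
        _ ≤ A ^ a * B ^ b * (a * (σ2 / A) + b * (σ2 / B)) :=
            mul_le_mul_of_nonneg_left hgm habmul.le
        _ = A ^ a * B ^ b * (a * σ2 / A + b * σ2 / B) := by ring
    have hsumle : ∑ c ∈ Finset.univ.erase j, g c * Real.exp ((a • x + b • y) c)
        ≤ ∑ c ∈ Finset.univ.erase j,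
            A ^ a * B ^ b * (a * (g c * Real.exp (x c)) / A + b * (g c * Real.exp (y c)) / B) :=
      Finset.sum_le_sum hterm
    have hsimp : σ2 + ∑ c ∈ Finset.univ.erase j,
        A ^ a * B ^ b * (a * (g c * Real.exp (x c)) / A + b * (g c * Real.exp (y c)) / B)
        ≤ A ^ a * B ^ b := by
      have hexpand : ∑ c ∈ Finset.univ.erase j,
          A ^ a * B ^ b * (a * (g c * Real.exp (x c)) / A + b * (g c * Real.exp (y c)) / B)
          = A ^ a * B ^ b * (a * (A - σ2) / A + b * (B - σ2) / B) := by
        rw [← Finset.mul_sum]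
        congr 1
        rw [Finset.sum_add_distrib]
        have h1 : ∑ c ∈ Finset.univ.erase j, a * (g c * Real.exp (x c)) / A
            = a * (A - σ2) / A := by
          rw [← Finset.sum_div, ← Finset.mul_sum]
          congr 2
          rw [hA]; ring
        have h2 : ∑ c ∈ Finset.univ.erase j, b * (g c * Real.exp (y c)) / B
            = b * (B - σ2) / B := by
          rw [← Finset.sum_div, ← Finset.mul_sum]
          congr 2
          rw [hB]; ring
        rw [h1, h2]
      rw [hexpand]
      have : σ2 + A ^ a * B ^ b * (a * (A - σ2) / A + b * (B - σ2) / B)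
          = σ2 + A ^ a * B ^ b * (a + b) - A ^ a * B ^ b * (a * σ2 / A + b * σ2 / B) := by
        field_simp
        ring
      rw [this, hab, mul_one]
      linarith [hσterm]
    linarith [hsumle]
  calc Real.log (σ2 + ∑ c ∈ Finset.univ.erase j, g c * Real.exp ((a • x + b • y) c))
      ≤ Real.log (A ^ a * B ^ b) := Real.log_le_log (hpos _) key
    _ = a * Real.log A + b * Real.log B := by
        rw [Real.log_mul (Real.rpow_pos_of_pos hApos a).ne' (Real.rpow_pos_of_pos hBpos b).ne',
          Real.log_rpow hApos, Real.log_rpow hBpos]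
    _ = a • Real.log A + b • Real.log B := by simp [smul_eq_mul]

/-- In log-power coordinates, the log-SINR
`p̃ ↦ log g_j + p̃_j − log (σ² + ∑_{c ≠ j} g_c exp (p̃_c))` is concave on `Fin C → ℝ`. -/
theorem logSINR_concave (C : ℕ) (hC : 0 < C) (j : Fin C) (σ2 : ℝ) (hσ2 : 0 < σ2)
    (g : Fin C → ℝ) (hgj : 0 < g j) (hg : ∀ c, c ≠ j → 0 ≤ g c) :
    ConcaveOn ℝ Set.univ
      (fun pt : Fin C → ℝ =>
        Real.log (g j) + pt j -
          Real.log (σ2 + ∑ c ∈ Finset.univ.erase j, g c * Real.exp (pt c))) := by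
  have h1 : ConcaveOn ℝ Set.univ (fun pt : Fin C → ℝ => Real.log (g j) + pt j) := by
    refine ⟨convex_univ, ?_⟩
    intro x _ y _ a b ha hb hab
    have : (a • x + b • y) j = a * x j + b * y j := by
      simp [Pi.add_apply, Pi.smul_apply, smul_eq_mul]
    simp only [this, smul_eq_mul]
    have e : a * (Real.log (g j) + x j) + b * (Real.log (g j) + y j)
        = Real.log (g j) + (a * x j + b * y j) := by
      linear_combination Real.log (g j) * hab
    exact le_of_eq e
  exact h1.sub (logsumexp_convex C j σ2 hσ2 g hg)
end

section
/- The function z ↦ log(log(1 + exp(z))) is concave on ℝ. -/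
open Real

private lemma pos1 (z : ℝ) : (0:ℝ) < 1 + Real.exp z := by positivity

private lemma Lpos (z : ℝ) : 0 < Real.log (1 + Real.exp z) := by
  apply Real.log_pos; linarith [Real.exp_pos z]

noncomputable def gder (z : ℝ) : ℝ :=
  Real.exp z / ((1 + Real.exp z) * Real.log (1 + Real.exp z))

noncomputable def gder2 (z : ℝ) : ℝ :=
  (Real.exp z * ((1 + Real.exp z) * Real.log (1 + Real.exp z)) -
      Real.exp z * (Real.exp z * Real.log (1 + Real.exp z) + Real.exp z)) /
    ((1 + Real.exp z) * Real.log (1 + Real.exp z)) ^ 2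

private lemma hasDerivAt_f (z : ℝ) :
    HasDerivAt (fun z : ℝ => Real.log (Real.log (1 + Real.exp z))) (gder z) z := by
  have h1 : HasDerivAt (fun z : ℝ => 1 + Real.exp z) (Real.exp z) z := by
    simpa using (Real.hasDerivAt_exp z).const_add 1
  have h2 := h1.log (pos1 z).ne'
  have h3 := h2.log (Lpos z).ne'
  simpa [gder, div_div] using h3

private lemma hasDerivAt_gder (z : ℝ) : HasDerivAt gder (gder2 z) z := by
  have h1 : HasDerivAt (fun z : ℝ => 1 + Real.exp z) (Real.exp z) z := by
    simpa using (Real.hasDerivAt_exp z).const_add 1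
  have h2 := h1.log (pos1 z).ne'
  have hD : HasDerivAt (fun z : ℝ => (1 + Real.exp z) * Real.log (1 + Real.exp z))
      (Real.exp z * Real.log (1 + Real.exp z) + Real.exp z) z := by
    have : HasDerivAt (fun z : ℝ => (1 + Real.exp z) * Real.log (1 + Real.exp z)) _ z := h1.mul h2
    convert this using 1
    have : (1 + Real.exp z) ≠ 0 := (pos1 z).ne'
    field_simp
  have hDne : ((1 + Real.exp z) * Real.log (1 + Real.exp z)) ≠ 0 :=
    (mul_pos (pos1 z) (Lpos z)).ne'
  exact (Real.hasDerivAt_exp z).div hD hDne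

private lemma gder2_nonpos (z : ℝ) : gder2 z ≤ 0 := by
  unfold gder2
  apply div_nonpos_of_nonpos_of_nonneg _ (sq_nonneg _)
  have hL : Real.log (1 + Real.exp z) ≤ Real.exp z := by
    have := Real.log_le_sub_one_of_pos (pos1 z)
    linarith
  have he := Real.exp_pos z
  nlinarith [Lpos z]

/-- The function `z ↦ log (log (1 + exp z))` is concave on `ℝ`. -/
theorem loglog_one_add_exp_concave :
    ConcaveOn ℝ Set.univ (fun z : ℝ => Real.log (Real.log (1 + Real.exp z))) := by
  apply concaveOn_of_hasDerivWithinAt2_nonpos (f' := gder) (f'' := gder2) convex_univ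
  · exact fun z _ => (hasDerivAt_f z).continuousAt.continuousWithinAt
  · exact fun z _ => (hasDerivAt_f z).hasDerivWithinAt
  · exact fun z _ => (hasDerivAt_gder z).hasDerivWithinAt
  · exact fun z _ => gder2_nonpos z
end

section
/- Let C be a positive natural number, j : Fin C a fixed index, σ² > 0, g_j > 0, and g_c ≥ 0 for all c ≠ j. Define γ(exp(p̃)) = g_j · exp(p̃_j) / (σ² + ∑_{c ≠ j} g_c · exp(p̃_c)). Then the function p̃ ↦ log(log(1 + γ(exp(p̃)))) is concave on ℝ^C (Fin C → ℝ). -/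
open Real

private lemma holder_sum {ι : Type*} (s : Finset ι) (u v : ι → ℝ)
    (hu : ∀ i ∈ s, 0 ≤ u i) (hv : ∀ i ∈ s, 0 ≤ v i) {a b : ℝ}
    (ha : 0 < a) (hb : 0 < b) (hab : a + b = 1) :
    ∑ i ∈ s, u i ^ a * v i ^ b ≤ (∑ i ∈ s, u i) ^ a * (∑ i ∈ s, v i) ^ b := by
  have hpq : Real.HolderConjugate (1 / a) (1 / b) := by
    refine ⟨?_, by positivity, by positivity⟩
    rw [one_div, inv_inv, one_div, inv_inv, inv_one]; exact hab
  have h := Real.inner_le_Lp_mul_Lq_of_nonneg s hpq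
      (f := fun i => u i ^ a) (g := fun i => v i ^ b)
      (fun i hi => Real.rpow_nonneg (hu i hi) a)
      (fun i hi => Real.rpow_nonneg (hv i hi) b)
  calc ∑ i ∈ s, u i ^ a * v i ^ b
      ≤ (∑ i ∈ s, (u i ^ a) ^ (1 / a)) ^ (1 / (1 / a)) *
        (∑ i ∈ s, (v i ^ b) ^ (1 / b)) ^ (1 / (1 / b)) := h
    _ = (∑ i ∈ s, u i) ^ a * (∑ i ∈ s, v i) ^ b := by
        rw [one_div_one_div, one_div_one_div]
        congr 1
        · congr 1
          refine Finset.sum_congr rfl fun i hi => ?_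
          rw [← Real.rpow_mul (hu i hi), mul_one_div_cancel ha.ne', Real.rpow_one]
        · congr 1
          refine Finset.sum_congr rfl fun i hi => ?_
          rw [← Real.rpow_mul (hv i hi), mul_one_div_cancel hb.ne', Real.rpow_one]

private lemma lse_convex {C : ℕ} (j : Fin C) {σ2 : ℝ} (hσ2 : 0 < σ2)
    (g : Fin C → ℝ) (hg : ∀ c, c ≠ j → 0 ≤ g c) :
    ConvexOn ℝ Set.univ (fun p : Fin C → ℝ =>
      Real.log (σ2 + ∑ c ∈ Finset.univ.erase j, g c * Real.exp (p c))) := by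
  have Spos : ∀ p : Fin C → ℝ,
      0 < σ2 + ∑ c ∈ Finset.univ.erase j, g c * Real.exp (p c) := by
    intro p
    have h0 : 0 ≤ ∑ c ∈ Finset.univ.erase j, g c * Real.exp (p c) :=
      Finset.sum_nonneg fun c hc =>
        mul_nonneg (hg c (Finset.ne_of_mem_erase hc)) (Real.exp_pos _).le
    linarith
  refine ⟨convex_univ, fun x _ y _ a b ha hb hab => ?_⟩
  rcases eq_or_lt_of_le ha with rfl | ha'
  · obtain rfl : b = 1 := by linarith
    simp
  rcases eq_or_lt_of_le hb with rfl | hb'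
  · obtain rfl : a = 1 := by linarith
    simp
  set u : Fin C → ℝ := fun i => if i = j then σ2 else g i * Real.exp (x i) with hu
  set v : Fin C → ℝ := fun i => if i = j then σ2 else g i * Real.exp (y i) with hv
  have hu0 : ∀ i ∈ Finset.univ (α := Fin C), 0 ≤ u i := by
    intro i _
    by_cases hij : i = j
    · simp [hu, hij, hσ2.le]
    · simp only [hu, if_neg hij]
      exact mul_nonneg (hg i hij) (Real.exp_pos _).le
  have hv0 : ∀ i ∈ Finset.univ (α := Fin C), 0 ≤ v i := by
    intro i _
    by_cases hij : i = j
    · simp [hv, hij, hσ2.le]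
    · simp only [hv, if_neg hij]
      exact mul_nonneg (hg i hij) (Real.exp_pos _).le
  have husum : ∑ i : Fin C, u i = σ2 + ∑ c ∈ Finset.univ.erase j, g c * Real.exp (x c) := by
    rw [← Finset.add_sum_erase _ u (Finset.mem_univ j)]
    simp only [hu, if_pos rfl]
    congr 1
    refine Finset.sum_congr rfl fun c hc => ?_
    rw [if_neg (Finset.ne_of_mem_erase hc)]
  have hvsum : ∑ i : Fin C, v i = σ2 + ∑ c ∈ Finset.univ.erase j, g c * Real.exp (y c) := by
    rw [← Finset.add_sum_erase _ v (Finset.mem_univ j)]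
    simp only [hv, if_pos rfl]
    congr 1
    refine Finset.sum_congr rfl fun c hc => ?_
    rw [if_neg (Finset.ne_of_mem_erase hc)]
  have key : σ2 + ∑ c ∈ Finset.univ.erase j, g c * Real.exp ((a • x + b • y) c) ≤
      (σ2 + ∑ c ∈ Finset.univ.erase j, g c * Real.exp (x c)) ^ a *
      (σ2 + ∑ c ∈ Finset.univ.erase j, g c * Real.exp (y c)) ^ b := by
    have hmain : σ2 + ∑ c ∈ Finset.univ.erase j, g c * Real.exp ((a • x + b • y) c) =
        ∑ i : Fin C, u i ^ a * v i ^ b := by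
      rw [← Finset.add_sum_erase _ (fun i => u i ^ a * v i ^ b) (Finset.mem_univ j)]
      simp only [hu, hv, if_pos rfl]
      congr 1
      · rw [← Real.rpow_add hσ2, hab, Real.rpow_one]
      · refine Finset.sum_congr rfl fun c hc => ?_
        have hcj : c ≠ j := Finset.ne_of_mem_erase hc
        rw [if_neg hcj, if_neg hcj]
        rw [Real.mul_rpow (hg c hcj) (Real.exp_pos _).le,
          Real.mul_rpow (hg c hcj) (Real.exp_pos _).le]
        have hgc : g c ^ a * g c ^ b = g c := by
          rw [← Real.rpow_add' (hg c hcj) (by rw [hab]; exact one_ne_zero), hab, Real.rpow_one]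
        have hec : Real.exp (x c) ^ a * Real.exp (y c) ^ b =
            Real.exp (a * x c + b * y c) := by
          rw [← Real.exp_mul, ← Real.exp_mul, ← Real.exp_add]
          ring_nf
        have happ : (a • x + b • y) c = a * x c + b * y c := by
          simp [Pi.add_apply, Pi.smul_apply, smul_eq_mul]
        rw [happ, ← hec]
        linear_combination (-(Real.exp (x c) ^ a * Real.exp (y c) ^ b)) * hgc
    rw [hmain, ← husum, ← hvsum]
    exact holder_sum Finset.univ u v hu0 hv0 ha' hb' hab
  have hRpos : 0 < (σ2 + ∑ c ∈ Finset.univ.erase j, g c * Real.exp (x c)) ^ a *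
      (σ2 + ∑ c ∈ Finset.univ.erase j, g c * Real.exp (y c)) ^ b :=
    mul_pos (Real.rpow_pos_of_pos (Spos x) a) (Real.rpow_pos_of_pos (Spos y) b)
  have hlog := (Real.log_le_log_iff (Spos _) hRpos).2 key
  calc Real.log (σ2 + ∑ c ∈ Finset.univ.erase j, g c * Real.exp ((a • x + b • y) c))
      ≤ Real.log ((σ2 + ∑ c ∈ Finset.univ.erase j, g c * Real.exp (x c)) ^ a *
        (σ2 + ∑ c ∈ Finset.univ.erase j, g c * Real.exp (y c)) ^ b) := hlog
    _ = a • Real.log (σ2 + ∑ c ∈ Finset.univ.erase j, g c * Real.exp (x c)) +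
        b • Real.log (σ2 + ∑ c ∈ Finset.univ.erase j, g c * Real.exp (y c)) := by
        rw [Real.log_mul (Real.rpow_pos_of_pos (Spos x) a).ne'
            (Real.rpow_pos_of_pos (Spos y) b).ne',
          Real.log_rpow (Spos x), Real.log_rpow (Spos y)]
        simp [smul_eq_mul]

private lemma loglog_exp_concave :
    ConcaveOn ℝ Set.univ (fun x : ℝ => Real.log (Real.log (1 + Real.exp x))) := by
  have h1 : ∀ x : ℝ, (0 : ℝ) < 1 + Real.exp x := fun x => by positivity
  have h2 : ∀ x : ℝ, (0 : ℝ) < Real.log (1 + Real.exp x) := fun x =>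
    Real.log_pos (by have := Real.exp_pos x; linarith)
  refine concaveOn_of_hasDerivWithinAt2_nonpos (f' := fun x =>
      Real.exp x / ((1 + Real.exp x) * Real.log (1 + Real.exp x)))
    (f'' := fun x => Real.exp x * (Real.log (1 + Real.exp x) - Real.exp x) /
      (((1 + Real.exp x) * Real.log (1 + Real.exp x)) ^ 2))
    convex_univ ?_ ?_ ?_ ?_
  · have c1 : Continuous fun x : ℝ => 1 + Real.exp x := continuous_const.add Real.continuous_exp
    have c2 : Continuous fun x : ℝ => Real.log (1 + Real.exp x) :=
      c1.log fun x => (h1 x).ne'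
    exact (c2.log fun x => (h2 x).ne').continuousOn
  · intro x _
    apply HasDerivAt.hasDerivWithinAt
    have hA : HasDerivAt (fun x : ℝ => 1 + Real.exp x) (Real.exp x) x :=
      (Real.hasDerivAt_exp x).const_add 1
    have hL : HasDerivAt (fun x : ℝ => Real.log (1 + Real.exp x))
        (Real.exp x / (1 + Real.exp x)) x := hA.log (h1 x).ne'
    have := hL.log (h2 x).ne'
    refine this.congr_deriv ?_
    rw [div_div]
  · intro x _
    apply HasDerivAt.hasDerivWithinAt
    have hA : HasDerivAt (fun x : ℝ => 1 + Real.exp x) (Real.exp x) x :=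
      (Real.hasDerivAt_exp x).const_add 1
    have hL : HasDerivAt (fun x : ℝ => Real.log (1 + Real.exp x))
        (Real.exp x / (1 + Real.exp x)) x := hA.log (h1 x).ne'
    have hD : HasDerivAt (fun x : ℝ => (1 + Real.exp x) * Real.log (1 + Real.exp x))
        (Real.exp x * Real.log (1 + Real.exp x) +
          (1 + Real.exp x) * (Real.exp x / (1 + Real.exp x))) x := hA.mul hL
    have hne : ((1 + Real.exp x) * Real.log (1 + Real.exp x)) ≠ 0 := by
      exact (mul_pos (h1 x) (h2 x)).ne'
    have := (Real.hasDerivAt_exp x).div hD hne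
    refine this.congr_deriv ?_
    have e1 : (1 + Real.exp x) * (Real.exp x / (1 + Real.exp x)) = Real.exp x :=
      mul_div_cancel₀ _ (h1 x).ne'
    rw [e1]
    field_simp
    ring
  · intro x _
    apply div_nonpos_of_nonpos_of_nonneg
    · apply mul_nonpos_of_nonneg_of_nonpos (Real.exp_pos x).le
      have := Real.log_le_sub_one_of_pos (h1 x)
      linarith
    · positivity

private lemma loglog_exp_monotone :
    Monotone (fun x : ℝ => Real.log (Real.log (1 + Real.exp x))) := by
  intro x y hxy
  have h1 : (0 : ℝ) < 1 + Real.exp x := by positivity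
  have h2 : (0 : ℝ) < Real.log (1 + Real.exp x) :=
    Real.log_pos (by have := Real.exp_pos x; linarith)
  have hle : Real.log (1 + Real.exp x) ≤ Real.log (1 + Real.exp y) := by
    apply (Real.log_le_log_iff h1 (by positivity)).2
    have := Real.exp_le_exp.2 hxy
    linarith
  exact (Real.log_le_log_iff h2 (lt_of_lt_of_le h2 hle)).2 hle

/-- With `γ(exp p̃) = g_j exp(p̃_j) / (σ² + ∑_{c ≠ j} g_c exp(p̃_c))`,
the function `p̃ ↦ log (log (1 + γ(exp p̃)))` is concave on `Fin C → ℝ`. -/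
theorem loglog_one_add_SINR_concave (C : ℕ) (hC : 0 < C) (j : Fin C) (σ2 : ℝ) (hσ2 : 0 < σ2)
    (g : Fin C → ℝ) (hgj : 0 < g j) (hg : ∀ c, c ≠ j → 0 ≤ g c) :
    ConcaveOn ℝ Set.univ
      (fun pt : Fin C → ℝ =>
        Real.log (Real.log (1 +
          g j * Real.exp (pt j) /
            (σ2 + ∑ c ∈ Finset.univ.erase j, g c * Real.exp (pt c))))) := by
  set S : (Fin C → ℝ) → ℝ :=
    fun p => σ2 + ∑ c ∈ Finset.univ.erase j, g c * Real.exp (p c) with hS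
  have Spos : ∀ p, 0 < S p := by
    intro p
    have h0 : 0 ≤ ∑ c ∈ Finset.univ.erase j, g c * Real.exp (p c) :=
      Finset.sum_nonneg fun c hc =>
        mul_nonneg (hg c (Finset.ne_of_mem_erase hc)) (Real.exp_pos _).le
    simp only [hS]
    linarith
  set Λ : (Fin C → ℝ) → ℝ := fun p => Real.log (g j) + p j - Real.log (S p) with hΛ
  have hΛconc : ConcaveOn ℝ Set.univ Λ := by
    have haff : ConcaveOn ℝ Set.univ (fun p : Fin C → ℝ => Real.log (g j) + p j) := by
      refine ⟨convex_univ, fun x _ y _ a b ha hb hab => ?_⟩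
      have happ : (a • x + b • y) j = a * x j + b * y j := by
        simp [Pi.add_apply, Pi.smul_apply, smul_eq_mul]
      simp only [smul_eq_mul, happ]
      have hgg : a * Real.log (g j) + b * Real.log (g j) = Real.log (g j) := by
        rw [← add_mul, hab, one_mul]
      linarith
    have := haff.sub (lse_convex j hσ2 g hg)
    exact this
  have hrw : ∀ p, 1 + g j * Real.exp (p j) / S p = 1 + Real.exp (Λ p) := by
    intro p
    congr 1
    rw [hΛ, Real.exp_sub, Real.exp_add, Real.exp_log hgj, Real.exp_log (Spos p)]
  have hfun : (fun pt : Fin C → ℝ =>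
        Real.log (Real.log (1 +
          g j * Real.exp (pt j) /
            (σ2 + ∑ c ∈ Finset.univ.erase j, g c * Real.exp (pt c))))) =
      fun pt => Real.log (Real.log (1 + Real.exp (Λ pt))) := by
    funext p
    rw [← hrw p]
  rw [hfun]
  refine ⟨convex_univ, fun x _ y _ a b ha hb hab => ?_⟩
  calc a • Real.log (Real.log (1 + Real.exp (Λ x))) +
        b • Real.log (Real.log (1 + Real.exp (Λ y)))
      ≤ Real.log (Real.log (1 + Real.exp (a • Λ x + b • Λ y))) :=
        loglog_exp_concave.2 (Set.mem_univ (Λ x)) (Set.mem_univ (Λ y)) ha hb hab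
    _ ≤ Real.log (Real.log (1 + Real.exp (Λ (a • x + b • y)))) := by
        apply loglog_exp_monotone
        have := hΛconc.2 (Set.mem_univ x) (Set.mem_univ y) ha hb hab
        simpa [smul_eq_mul] using this
end

section
/- Consider N users and C cells. For each user n let c(n) : Fin C be its serving cell, let G_{n,c} > 0 be channel gains, σ² > 0 the noise power, W_n > 0 the bandwidth allocated to user n, and P^max_c > 0 the maximum power of cell c. Define γ_n(p) = G_{n,c(n)} · p_{c(n)} / (σ² + ∑_{c ≠ c(n)} G_{n,c} · p_c). Then the transformed feasible set S = { (r̃, p̃) ∈ (Fin N → ℝ) × (Fin C → ℝ) : (∀ n, r̃_n ≤ log(W_n) + log( log(1 + γ_n(exp ∘ p̃)) / log 2 )) ∧ (∀ c, p̃_c ≤ log(P^max_c)) } is a convex subset of (Fin N → ℝ) × (Fin C → ℝ). (This is the first part of Proposition 1: the transformed problem (3) is jointly convex in r̃ and p̃.) -/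
open Real

/-- The SINR of user `n` under cell power vector `p`:
`γ_n(p) = G_{n,c(n)} p_{c(n)} / (σ² + ∑_{c ≠ c(n)} G_{n,c} p_c)`. -/
noncomputable def sinr {N C : ℕ} (cn : Fin N → Fin C) (G : Fin N → Fin C → ℝ) (σ2 : ℝ)
    (n : Fin N) (p : Fin C → ℝ) : ℝ :=
  G n (cn n) * p (cn n) / (σ2 + ∑ c ∈ Finset.univ.erase (cn n), G n c * p c)

/-! ### Auxiliary lemmas -/

/-- The outer function `g(t) = log (log (1 + eᵗ))`. -/
noncomputable def gfun (t : ℝ) : ℝ := Real.log (Real.log (1 + Real.exp t))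

/-- The derivative of `gfun`. -/
noncomputable def gfun' (t : ℝ) : ℝ :=
  Real.exp t / ((1 + Real.exp t) * Real.log (1 + Real.exp t))

/-- The second derivative of `gfun`. -/
noncomputable def gfun'' (t : ℝ) : ℝ :=
  (Real.exp t * ((1 + Real.exp t) * Real.log (1 + Real.exp t)) -
      Real.exp t * (Real.exp t * Real.log (1 + Real.exp t) + Real.exp t)) /
    ((1 + Real.exp t) * Real.log (1 + Real.exp t)) ^ 2

lemma one_add_exp_pos (t : ℝ) : (0:ℝ) < 1 + Real.exp t := by positivity

lemma log_one_add_exp_pos (t : ℝ) : 0 < Real.log (1 + Real.exp t) :=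
  Real.log_pos (by linarith [Real.exp_pos t])

lemma hasDerivAt_L (t : ℝ) :
    HasDerivAt (fun t => Real.log (1 + Real.exp t)) (Real.exp t / (1 + Real.exp t)) t :=
  ((Real.hasDerivAt_exp t).const_add 1).log (one_add_exp_pos t).ne'

lemma hasDerivAt_gfun (t : ℝ) : HasDerivAt gfun (gfun' t) t := by
  have h := (hasDerivAt_L t).log (log_one_add_exp_pos t).ne'
  rw [div_div] at h
  exact h

lemma hasDerivAt_gfun' (t : ℝ) : HasDerivAt gfun' (gfun'' t) t := by
  have hden : HasDerivAt (fun t => (1 + Real.exp t) * Real.log (1 + Real.exp t))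
      (Real.exp t * Real.log (1 + Real.exp t) +
        (1 + Real.exp t) * (Real.exp t / (1 + Real.exp t))) t :=
    ((Real.hasDerivAt_exp t).const_add 1).mul (hasDerivAt_L t)
  have hsimp : (1 + Real.exp t) * (Real.exp t / (1 + Real.exp t)) = Real.exp t := by
    field_simp
  rw [hsimp] at hden
  have hne : (1 + Real.exp t) * Real.log (1 + Real.exp t) ≠ 0 :=
    (mul_pos (one_add_exp_pos t) (log_one_add_exp_pos t)).ne'
  exact (Real.hasDerivAt_exp t).div hden hne

lemma gfun''_nonpos (t : ℝ) : gfun'' t ≤ 0 := by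
  have hlog : Real.log (1 + Real.exp t) ≤ Real.exp t := by
    have := Real.log_le_sub_one_of_pos (one_add_exp_pos t)
    linarith
  have hnum : Real.exp t * ((1 + Real.exp t) * Real.log (1 + Real.exp t)) -
      Real.exp t * (Real.exp t * Real.log (1 + Real.exp t) + Real.exp t) ≤ 0 := by
    have h1 : Real.exp t * ((1 + Real.exp t) * Real.log (1 + Real.exp t)) -
        Real.exp t * (Real.exp t * Real.log (1 + Real.exp t) + Real.exp t) =
        Real.exp t * (Real.log (1 + Real.exp t) - Real.exp t) := by ring
    rw [h1]
    exact mul_nonpos_of_nonneg_of_nonpos (Real.exp_pos t).le (by linarith)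
  exact div_nonpos_of_nonpos_of_nonneg hnum (sq_nonneg _)

lemma gfun_concave : ConcaveOn ℝ Set.univ gfun := by
  have hderiv : deriv gfun = gfun' := funext fun t => (hasDerivAt_gfun t).deriv
  apply concaveOn_univ_of_deriv2_nonpos
  · exact fun t => (hasDerivAt_gfun t).differentiableAt
  · rw [hderiv]; exact fun t => (hasDerivAt_gfun' t).differentiableAt
  · intro t
    show deriv (deriv gfun) t ≤ 0
    rw [hderiv, (hasDerivAt_gfun' t).deriv]
    exact gfun''_nonpos t

lemma gfun_mono : Monotone gfun := by
  intro s t hst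
  have h1 : Real.log (1 + Real.exp s) ≤ Real.log (1 + Real.exp t) :=
    (Real.log_le_log_iff (one_add_exp_pos s) (one_add_exp_pos t)).2
      (by linarith [Real.exp_le_exp.2 hst])
  exact (Real.log_le_log_iff (log_one_add_exp_pos s) (log_one_add_exp_pos t)).2 h1

/-- Hölder-type inequality for the "noise plus interference" sums. -/
lemma holder_aux {ι : Type*} (s : Finset ι) (u v : ι → ℝ) (hu : ∀ i ∈ s, 0 ≤ u i)
    (hv : ∀ i ∈ s, 0 ≤ v i) {σ2 a b : ℝ} (hσ2 : 0 < σ2) (ha : 0 ≤ a) (hb : 0 ≤ b)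
    (hab : a + b = 1) :
    σ2 + ∑ i ∈ s, (u i) ^ a * (v i) ^ b ≤
      (σ2 + ∑ i ∈ s, u i) ^ a * (σ2 + ∑ i ∈ s, v i) ^ b := by
  have hsu : 0 ≤ ∑ i ∈ s, u i := Finset.sum_nonneg hu
  have hsv : 0 ≤ ∑ i ∈ s, v i := Finset.sum_nonneg hv
  set U : ℝ := σ2 + ∑ i ∈ s, u i with hU
  set V : ℝ := σ2 + ∑ i ∈ s, v i with hV
  have hUpos : 0 < U := by rw [hU]; linarith
  have hVpos : 0 < V := by rw [hV]; linarith
  have hUa : (0:ℝ) < U ^ a := Real.rpow_pos_of_pos hUpos a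
  have hVb : (0:ℝ) < V ^ b := Real.rpow_pos_of_pos hVpos b
  have key : ∀ x y : ℝ, 0 ≤ x → 0 ≤ y →
      x ^ a * y ^ b ≤ U ^ a * V ^ b * (a * (x / U) + b * (y / V)) := by
    intro x y hx hy
    have h := Real.geom_mean_le_arith_mean2_weighted ha hb
      (div_nonneg hx hUpos.le) (div_nonneg hy hVpos.le) hab
    have heq : x ^ a * y ^ b = U ^ a * V ^ b * ((x / U) ^ a * (y / V) ^ b) := by
      rw [Real.div_rpow hx hUpos.le, Real.div_rpow hy hVpos.le]
      field_simp
    rw [heq]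
    exact mul_le_mul_of_nonneg_left h (by positivity)
  have hterm : ∀ i ∈ s, (u i) ^ a * (v i) ^ b ≤
      U ^ a * V ^ b * (a * (u i / U) + b * (v i / V)) :=
    fun i hi => key _ _ (hu i hi) (hv i hi)
  have hσ : σ2 ≤ U ^ a * V ^ b * (a * (σ2 / U) + b * (σ2 / V)) := by
    have h0 : σ2 = σ2 ^ a * σ2 ^ b := by
      rw [← Real.rpow_add hσ2, hab, Real.rpow_one]
    calc σ2 = σ2 ^ a * σ2 ^ b := h0
      _ ≤ U ^ a * V ^ b * (a * (σ2 / U) + b * (σ2 / V)) := key _ _ hσ2.le hσ2.le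
  calc σ2 + ∑ i ∈ s, (u i) ^ a * (v i) ^ b
      ≤ U ^ a * V ^ b * (a * (σ2 / U) + b * (σ2 / V)) +
        ∑ i ∈ s, U ^ a * V ^ b * (a * (u i / U) + b * (v i / V)) :=
        add_le_add hσ (Finset.sum_le_sum hterm)
    _ = U ^ a * V ^ b *
        ((a * (σ2 / U) + b * (σ2 / V)) + ∑ i ∈ s, (a * (u i / U) + b * (v i / V))) := by
        rw [← Finset.mul_sum]; ring
    _ = U ^ a * V ^ b := by
        have hsum : ∑ i ∈ s, (a * (u i / U) + b * (v i / V)) =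
            a * ((∑ i ∈ s, u i) / U) + b * ((∑ i ∈ s, v i) / V) := by
          rw [Finset.sum_add_distrib]
          congr 1
          · rw [← Finset.mul_sum, ← Finset.sum_div]
          · rw [← Finset.mul_sum, ← Finset.sum_div]
        rw [hsum]
        have hcoef : (a * (σ2 / U) + b * (σ2 / V)) +
            (a * ((∑ i ∈ s, u i) / U) + b * ((∑ i ∈ s, v i) / V)) = 1 := by
          field_simp
          linear_combination (σ2 + ∑ i ∈ s, u i) * (σ2 + ∑ i ∈ s, v i) * hab
        rw [hcoef, mul_one]

/-- Proposition 1, first part: the feasible set of the transformed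
problem (3) is a convex subset of `(Fin N → ℝ) × (Fin C → ℝ)`. -/
theorem transformed_feasible_set_convex (N C : ℕ) (hN : 0 < N) (hC : 0 < C)
    (cn : Fin N → Fin C) (G : Fin N → Fin C → ℝ) (hG : ∀ n c, 0 < G n c)
    (σ2 : ℝ) (hσ2 : 0 < σ2) (W : Fin N → ℝ) (hW : ∀ n, 0 < W n)
    (Pmax : Fin C → ℝ) (hPmax : ∀ c, 0 < Pmax c) :
    Convex ℝ {x : (Fin N → ℝ) × (Fin C → ℝ) |
      (∀ n, x.1 n ≤ Real.log (W n) +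
        Real.log (Real.log (1 + sinr cn G σ2 n (fun c => Real.exp (x.2 c))) / Real.log 2)) ∧
      (∀ c, x.2 c ≤ Real.log (Pmax c))} := by
  -- basic positivity facts about the SINR at exponentiated powers
  have hden_pos : ∀ (n : Fin N) (p : Fin C → ℝ),
      0 < σ2 + ∑ c ∈ Finset.univ.erase (cn n), G n c * Real.exp (p c) := by
    intro n p
    have : 0 ≤ ∑ c ∈ Finset.univ.erase (cn n), G n c * Real.exp (p c) :=
      Finset.sum_nonneg fun c _ => (mul_pos (hG n c) (Real.exp_pos _)).le
    linarith
  have hsinr_pos : ∀ (n : Fin N) (p : Fin C → ℝ),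
      0 < sinr cn G σ2 n (fun c => Real.exp (p c)) := by
    intro n p
    exact div_pos (mul_pos (hG n (cn n)) (Real.exp_pos _)) (hden_pos n p)
  -- the inner concave function: log of the SINR
  set hval : Fin N → (Fin C → ℝ) → ℝ :=
    fun n p => Real.log (sinr cn G σ2 n (fun c => Real.exp (p c))) with hhval
  have hval_eq : ∀ (n : Fin N) (p : Fin C → ℝ),
      hval n p = Real.log (G n (cn n)) + p (cn n) -
        Real.log (σ2 + ∑ c ∈ Finset.univ.erase (cn n), G n c * Real.exp (p c)) := by
    intro n p
    rw [hhval]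
    simp only [sinr]
    rw [Real.log_div (mul_pos (hG n (cn n)) (Real.exp_pos _)).ne' (hden_pos n p).ne',
      Real.log_mul (hG n (cn n)).ne' (Real.exp_pos _).ne', Real.log_exp]
  -- the objective function rewritten through gfun
  have hF_eq : ∀ (n : Fin N) (p : Fin C → ℝ),
      Real.log (Real.log (1 + sinr cn G σ2 n (fun c => Real.exp (p c))) / Real.log 2) =
        gfun (hval n p) - Real.log (Real.log 2) := by
    intro n p
    have hexp : Real.exp (hval n p) = sinr cn G σ2 n (fun c => Real.exp (p c)) :=
      Real.exp_log (hsinr_pos n p)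
    have h1 : 0 < Real.log (1 + sinr cn G σ2 n (fun c => Real.exp (p c))) :=
      Real.log_pos (by linarith [hsinr_pos n p])
    rw [Real.log_div h1.ne' (Real.log_pos one_lt_two).ne', gfun, hexp]
  intro x hx y hy a b ha hb hab
  obtain ⟨hx1, hx2⟩ := hx
  obtain ⟨hy1, hy2⟩ := hy
  have hcomb2 : ∀ c : Fin C, (a • x + b • y).2 c = a * x.2 c + b * y.2 c := by
    intro c; simp [Prod.smul_snd]
  have hcomb1 : ∀ n : Fin N, (a • x + b • y).1 n = a * x.1 n + b * y.1 n := by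
    intro n; simp [Prod.smul_fst]
  constructor
  · intro n
    -- concavity of hval n
    have hval_concave : a * hval n x.2 + b * hval n y.2 ≤ hval n ((a • x + b • y).2) := by
      have hL : Real.log (σ2 + ∑ c ∈ Finset.univ.erase (cn n),
            G n c * Real.exp (a * x.2 c + b * y.2 c)) ≤
          a * Real.log (σ2 + ∑ c ∈ Finset.univ.erase (cn n), G n c * Real.exp (x.2 c)) +
          b * Real.log (σ2 + ∑ c ∈ Finset.univ.erase (cn n), G n c * Real.exp (y.2 c)) := by
        set u : Fin C → ℝ := fun c => G n c * Real.exp (x.2 c) with hu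
        set v : Fin C → ℝ := fun c => G n c * Real.exp (y.2 c) with hv
        have hterm : ∀ c ∈ Finset.univ.erase (cn n),
            G n c * Real.exp (a * x.2 c + b * y.2 c) = (u c) ^ a * (v c) ^ b := by
          intro c _
          rw [hu, hv]
          simp only
          have hE : a * x.2 c + b * y.2 c = x.2 c * a + y.2 c * b := by ring
          have hG1 : G n c = G n c ^ a * G n c ^ b := by
            rw [← Real.rpow_add (hG n c), hab, Real.rpow_one]
          rw [Real.mul_rpow (hG n c).le (Real.exp_pos _).le,
            Real.mul_rpow (hG n c).le (Real.exp_pos _).le,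
            ← Real.exp_mul, ← Real.exp_mul, hE, Real.exp_add]
          linear_combination (Real.exp (x.2 c * a) * Real.exp (y.2 c * b)) * hG1
        rw [Finset.sum_congr rfl hterm]
        have hholder := holder_aux (Finset.univ.erase (cn n)) u v
          (fun c _ => (mul_pos (hG n c) (Real.exp_pos _)).le)
          (fun c _ => (mul_pos (hG n c) (Real.exp_pos _)).le) hσ2 ha hb hab
        have hUpos : 0 < σ2 + ∑ c ∈ Finset.univ.erase (cn n), u c := hden_pos n x.2
        have hVpos : 0 < σ2 + ∑ c ∈ Finset.univ.erase (cn n), v c := hden_pos n y.2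
        have hLHSpos : 0 < σ2 + ∑ c ∈ Finset.univ.erase (cn n), (u c) ^ a * (v c) ^ b := by
          have : 0 ≤ ∑ c ∈ Finset.univ.erase (cn n), (u c) ^ a * (v c) ^ b :=
            Finset.sum_nonneg fun c _ =>
              mul_nonneg (Real.rpow_nonneg (mul_pos (hG n c) (Real.exp_pos _)).le a)
                (Real.rpow_nonneg (mul_pos (hG n c) (Real.exp_pos _)).le b)
          linarith
        calc Real.log (σ2 + ∑ c ∈ Finset.univ.erase (cn n), (u c) ^ a * (v c) ^ b)
            ≤ Real.log ((σ2 + ∑ c ∈ Finset.univ.erase (cn n), u c) ^ a *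
              (σ2 + ∑ c ∈ Finset.univ.erase (cn n), v c) ^ b) :=
              (Real.log_le_log_iff hLHSpos
                (mul_pos (Real.rpow_pos_of_pos hUpos a) (Real.rpow_pos_of_pos hVpos b))).2 hholder
          _ = a * Real.log (σ2 + ∑ c ∈ Finset.univ.erase (cn n), u c) +
              b * Real.log (σ2 + ∑ c ∈ Finset.univ.erase (cn n), v c) := by
              rw [Real.log_mul (Real.rpow_pos_of_pos hUpos a).ne'
                (Real.rpow_pos_of_pos hVpos b).ne',
                Real.log_rpow hUpos, Real.log_rpow hVpos]
      have hx_eq := hval_eq n x.2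
      have hy_eq := hval_eq n y.2
      have hc_eq := hval_eq n ((a • x + b • y).2)
      rw [hx_eq, hy_eq, hc_eq]
      simp only [hcomb2]
      have hKK : a * Real.log (G n (cn n)) + b * Real.log (G n (cn n)) =
          Real.log (G n (cn n)) := by rw [← add_mul, hab, one_mul]
      linarith [hL, hKK]
    -- monotone + concave composition
    have hgm : gfun (a * hval n x.2 + b * hval n y.2) ≤ gfun (hval n ((a • x + b • y).2)) :=
      gfun_mono hval_concave
    have hgc : a * gfun (hval n x.2) + b * gfun (hval n y.2) ≤
        gfun (a * hval n x.2 + b * hval n y.2) := by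
      have := gfun_concave.2 (Set.mem_univ (hval n x.2)) (Set.mem_univ (hval n y.2)) ha hb hab
      simpa using this
    have h1 := hx1 n
    have h2 := hy1 n
    rw [hF_eq n x.2] at h1
    rw [hF_eq n y.2] at h2
    show (a • x + b • y).1 n ≤ _
    rw [hcomb1 n, hF_eq n ((a • x + b • y).2)]
    have haW : a * Real.log (W n) + b * Real.log (W n) = Real.log (W n) := by
      rw [← add_mul, hab, one_mul]
    have hal2 : a * Real.log (Real.log 2) + b * Real.log (Real.log 2) =
        Real.log (Real.log 2) := by rw [← add_mul, hab, one_mul]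
    nlinarith [mul_le_mul_of_nonneg_left h1 ha, mul_le_mul_of_nonneg_left h2 hb,
      hgc, hgm, haW, hal2]
  · intro c
    have h1 := hx2 c
    have h2 := hy2 c
    show (a • x + b • y).2 c ≤ _
    rw [hcomb2 c]
    have hP : a * Real.log (Pmax c) + b * Real.log (Pmax c) = Real.log (Pmax c) := by
      rw [← add_mul, hab, one_mul]
    nlinarith [mul_le_mul_of_nonneg_left h1 ha, mul_le_mul_of_nonneg_left h2 hb, hP]
end
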